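/- Boundedness of the restriction map from the Hardy space to the weighted L² space (Fejér–Riesz type inequality): if g : ℂ → ℂ is holomorphic on ℂ₊ = {z : Re z > 0} and M ≥ 0 satisfies ∫_ℝ |g(x+iy)|² dy ≤ M for every x > 0, then the restriction of g to the positive real axis satisfies ∫₀^∞ |g(x)|² e^{-x} dx ≤ M/2. In particular the restriction map i : g ↦ g|_{(0,∞)} is bounded from H²(ℂ₊) to L²((0,∞), e^{-x}dx). -/

import Mathlib

open MeasureTheory Real Complex Set

open scoped ENNReal NNReal Interval

open Filter

noncomputable def FRaux (g : ℂ → ℂ) (z : ℂ) : ℂ :=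
  g z * (starRingEnd ℂ) (g ((starRingEnd ℂ) z)) * Complex.exp (-z)

lemma hasDerivAt_conj_conj {g : ℂ → ℂ} {d w : ℂ} (h : HasDerivAt g d w) :
    HasDerivAt (fun z => (starRingEnd ℂ) (g ((starRingEnd ℂ) z)))
      ((starRingEnd ℂ) d) ((starRingEnd ℂ) w) := by
  rw [hasDerivAt_iff_tendsto] at h ⊢
  have hc : Filter.Tendsto (fun z : ℂ => (starRingEnd ℂ) z) (nhds ((starRingEnd ℂ) w)) (nhds w) := by
    simpa using (Complex.continuous_conj.tendsto ((starRingEnd ℂ) w))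
  refine (h.comp hc).congr fun z => ?_
  have h1 : ‖(starRingEnd ℂ) z - w‖ = ‖z - (starRingEnd ℂ) w‖ := by
    rw [← RCLike.norm_conj (z - (starRingEnd ℂ) w)]; simp [map_sub]
  have h2 : ‖g ((starRingEnd ℂ) z) - g w - ((starRingEnd ℂ) z - w) • d‖ =
      ‖(starRingEnd ℂ) (g ((starRingEnd ℂ) z)) - (starRingEnd ℂ) (g ((starRingEnd ℂ) ((starRingEnd ℂ) w))) -
        (z - (starRingEnd ℂ) w) • (starRingEnd ℂ) d‖ := by
    rw [← RCLike.norm_conj (g ((starRingEnd ℂ) z) - g w - ((starRingEnd ℂ) z - w) • d)]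
    congr 1
    simp [map_sub, map_mul, smul_eq_mul]
  simp only [Function.comp]
  rw [← h1, ← h2]

lemma FRaux_diff {g : ℂ → ℂ} (hg : DifferentiableOn ℂ g {z : ℂ | 0 < z.re}) :
    ∀ z : ℂ, 0 < z.re → DifferentiableAt ℂ (FRaux g) z := by
  intro z hz
  have ho : IsOpen {z : ℂ | 0 < z.re} := isOpen_lt continuous_const Complex.continuous_re
  have d1 : DifferentiableAt ℂ g z := hg.differentiableAt (ho.mem_nhds hz)
  have hz' : ((starRingEnd ℂ) z).re > 0 := by simpa using hz
  have d2 : DifferentiableAt ℂ (fun w => (starRingEnd ℂ) (g ((starRingEnd ℂ) w))) z := by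
    have := (hg.differentiableAt (ho.mem_nhds hz')).hasDerivAt
    have := hasDerivAt_conj_conj this
    rw [Complex.conj_conj] at this
    exact this.differentiableAt
  have d3 : DifferentiableAt ℂ (fun w : ℂ => Complex.exp (-w)) z :=
    (Complex.differentiable_exp.comp differentiable_neg).differentiableAt
  exact (d1.mul d2).mul d3

lemma FRaux_cont {g : ℂ → ℂ} (hg : DifferentiableOn ℂ g {z : ℂ | 0 < z.re}) :
    ContinuousOn (FRaux g) {z : ℂ | 0 < z.re} :=
  fun z hz => ((FRaux_diff hg z hz).continuousAt).continuousWithinAt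

lemma FRaux_norm {g : ℂ → ℂ} (x y : ℝ) :
    ‖FRaux g (x + y * Complex.I)‖ =
      ‖g (x + y * Complex.I)‖ * ‖g (x + (-y : ℝ) * Complex.I)‖
        * Real.exp (-x) := by
  have hconj : (starRingEnd ℂ) (↑x + ↑y * Complex.I) = ↑x + ↑(-y : ℝ) * Complex.I := by
    simp [Complex.ext_iff]
  unfold FRaux
  rw [hconj]
  simp only [norm_mul, RCLike.norm_conj, Complex.norm_exp]
  congr 2
  simp

lemma FRaux_real (g : ℂ → ℂ) (x : ℝ) :
    FRaux g x = ((‖g x‖ ^ 2 * Real.exp (-x) : ℝ) : ℂ) := by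
  unfold FRaux
  rw [Complex.conj_ofReal]
  rw [Complex.mul_conj]
  push_cast
  rw [← Complex.ofReal_neg, ← Complex.ofReal_exp]
  norm_cast
  rw [Complex.sq_norm]

lemma FRaux_conj (g : ℂ → ℂ) (z : ℂ) :
    FRaux g ((starRingEnd ℂ) z) = (starRingEnd ℂ) (FRaux g z) := by
  unfold FRaux
  rw [Complex.conj_conj, map_mul, map_mul, Complex.conj_conj, ← Complex.exp_conj, map_neg]
  ring

lemma FRaux_line_bound {g : ℂ → ℂ} {M : ℝ} (hM : 0 ≤ M) {x : ℝ} (hx : 0 < x)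
    (hmeas : Measurable fun y : ℝ => g (x + y * Complex.I))
    (hbound : (∫⁻ y : ℝ, ENNReal.ofReal (‖g (x + y * Complex.I)‖ ^ 2)) ≤
        ENNReal.ofReal M) :
    (∫⁻ y : ℝ, ENNReal.ofReal ‖FRaux g (x + y * Complex.I)‖) ≤
      ENNReal.ofReal (Real.exp (-x) * M) := by
  set a : ℝ → ℝ := fun y => ‖g (x + y * Complex.I)‖ with ha
  have hmeasa : Measurable fun y => ENNReal.ofReal (a y ^ 2) := by
    exact ((hmeas.norm.pow_const 2).ennreal_ofReal)
  have hpt : ∀ y : ℝ, ENNReal.ofReal ‖FRaux g (x + y * Complex.I)‖ ≤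
      ENNReal.ofReal (Real.exp (-x) / 2) *
        (ENNReal.ofReal (a y ^ 2) + ENNReal.ofReal (a (-y) ^ 2)) := by
    intro y
    rw [← ENNReal.ofReal_add (by positivity) (by positivity),
      ← ENNReal.ofReal_mul (by positivity)]
    apply ENNReal.ofReal_le_ofReal
    rw [FRaux_norm]
    have h2 : 2 * a y * a (-y) ≤ a y ^ 2 + a (-y) ^ 2 := two_mul_le_add_sq _ _
    have hexp : (0:ℝ) < Real.exp (-x) := Real.exp_pos _
    have : ‖g (↑x + ↑y * Complex.I)‖ * ‖g (↑x + ↑(-y) * Complex.I)‖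
        = a y * a (-y) := rfl
    rw [this]
    nlinarith [hexp.le, mul_nonneg (norm_nonneg (g (x + y * Complex.I)))
      (norm_nonneg (g (x + (-y : ℝ) * Complex.I)))]
  calc (∫⁻ y : ℝ, ENNReal.ofReal ‖FRaux g (x + y * Complex.I)‖)
      ≤ ∫⁻ y : ℝ, ENNReal.ofReal (Real.exp (-x) / 2) *
          (ENNReal.ofReal (a y ^ 2) + ENNReal.ofReal (a (-y) ^ 2)) := lintegral_mono hpt
    _ = ENNReal.ofReal (Real.exp (-x) / 2) *
          ((∫⁻ y : ℝ, ENNReal.ofReal (a y ^ 2)) + ∫⁻ y : ℝ, ENNReal.ofReal (a (-y) ^ 2)) := by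
        rw [lintegral_const_mul' _ _ ENNReal.ofReal_ne_top,
          lintegral_add_left hmeasa]
    _ = ENNReal.ofReal (Real.exp (-x) / 2) *
          ((∫⁻ y : ℝ, ENNReal.ofReal (a y ^ 2)) + ∫⁻ y : ℝ, ENNReal.ofReal (a y ^ 2)) := by
        congr 2
        exact (Measure.measurePreserving_neg (volume : Measure ℝ)).lintegral_comp hmeasa
    _ ≤ ENNReal.ofReal (Real.exp (-x) / 2) * (ENNReal.ofReal M + ENNReal.ofReal M) := by
        gcongr <;> exact hbound
    _ = ENNReal.ofReal (Real.exp (-x) * M) := by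
        rw [← ENNReal.ofReal_add hM hM, ← ENNReal.ofReal_mul (by positivity)]
        congr 1; ring

lemma FRaux_line_continuous {g : ℂ → ℂ} (hg : DifferentiableOn ℂ g {z : ℂ | 0 < z.re})
    {x : ℝ} (hx : 0 < x) : Continuous fun y : ℝ => FRaux g (x + y * Complex.I) := by
  apply (FRaux_cont hg).comp_continuous (by continuity)
  intro y
  simp [hx]

lemma FRaux_line_integrable {g : ℂ → ℂ} (hg : DifferentiableOn ℂ g {z : ℂ | 0 < z.re})
    {x : ℝ} (hx : 0 < x)
    (hfin : (∫⁻ y : ℝ, ENNReal.ofReal ‖FRaux g (x + y * Complex.I)‖) < ⊤) :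
    Integrable (fun y : ℝ => FRaux g (x + y * Complex.I)) := by
  refine ⟨(FRaux_line_continuous hg hx).aestronglyMeasurable, ?_⟩
  rwa [hasFiniteIntegral_iff_norm]

lemma FRaux_key {g : ℂ → ℂ} (hg : DifferentiableOn ℂ g {z : ℂ | 0 < z.re}) {M : ℝ} (hM : 0 ≤ M)
    (hmeas : ∀ x : ℝ, 0 < x → Measurable fun y : ℝ => g (x + y * Complex.I))
    (hbound : ∀ x : ℝ, 0 < x →
      (∫⁻ y : ℝ, ENNReal.ofReal (‖g (x + y * Complex.I)‖ ^ 2)) ≤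
        ENNReal.ofReal M)
    {ε A : ℝ} (hε : 0 < ε) (hεA : ε ≤ A) :
    (∫ x in ε..A, ‖g x‖ ^ 2 * Real.exp (-x)) ≤ M / 2 * (Real.exp (-ε) + Real.exp (-A)) := by
  have hA : 0 < A := lt_of_lt_of_le hε hεA
  -- line bounds
  have lineBound : ∀ c : ℝ, 0 < c →
      (∫⁻ y : ℝ, ENNReal.ofReal ‖FRaux g (c + y * Complex.I)‖) ≤
        ENNReal.ofReal (Real.exp (-c) * M) :=
    fun c hc => FRaux_line_bound hM hc (hmeas c hc) (hbound c hc)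
  have lineInt : ∀ c : ℝ, 0 < c → Integrable (fun y : ℝ => FRaux g (c + y * Complex.I)) :=
    fun c hc => FRaux_line_integrable hg hc (lt_of_le_of_lt (lineBound c hc) ENNReal.ofReal_lt_top)
  -- the vertical half-line integrals
  set P : ℝ → ℂ := fun c => ∫ y in Ioi (0:ℝ), FRaux g (c + y * Complex.I) with hP
  set T1 : ℂ := ∫ x in ε..A, FRaux g x with hT1
  set Φ : ℝ → ℂ := fun B => T1 - Complex.I • (∫ y in (0:ℝ)..B, FRaux g (ε + y * Complex.I))
      + Complex.I • (∫ y in (0:ℝ)..B, FRaux g (A + y * Complex.I)) with hΦ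
  -- rectangle identity
  have rect : ∀ B : ℝ, 0 ≤ B → Φ B = ∫ x in ε..A, FRaux g (x + B * Complex.I) := by
    intro B hB
    have Hd : DifferentiableOn ℂ (FRaux g)
        ([[((⟨ε, 0⟩ : ℂ)).re, ((⟨A, B⟩ : ℂ)).re]] ×ℂ
          [[((⟨ε, 0⟩ : ℂ)).im, ((⟨A, B⟩ : ℂ)).im]]) := by
      intro z hz
      refine (FRaux_diff hg z ?_).differentiableWithinAt
      rw [Complex.mem_reProdIm] at hz
      have h1 : z.re ∈ [[ε, A]] := hz.1
      rw [uIcc_of_le hεA] at h1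
      exact lt_of_lt_of_le hε h1.1
    have h0 := Complex.integral_boundary_rect_eq_zero_of_differentiableOn (FRaux g)
      ⟨ε, 0⟩ ⟨A, B⟩ Hd
    simp only [Complex.ofReal_zero, zero_mul, add_zero, smul_eq_mul] at h0
    rw [hΦ]
    simp only [smul_eq_mul]
    linear_combination h0
  -- limit of Φ
  set L : ℂ := T1 - Complex.I • P ε + Complex.I • P A with hL
  have tends : Tendsto Φ atTop (nhds L) := by
    have h1 : Tendsto (fun B : ℝ => ∫ y in (0:ℝ)..B, FRaux g (ε + y * Complex.I)) atTop
        (nhds (P ε)) :=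
      intervalIntegral_tendsto_integral_Ioi 0 ((lineInt ε hε).integrableOn) tendsto_id
    have h2 : Tendsto (fun B : ℝ => ∫ y in (0:ℝ)..B, FRaux g (A + y * Complex.I)) atTop
        (nhds (P A)) :=
      intervalIntegral_tendsto_integral_Ioi 0 ((lineInt A hA).integrableOn) tendsto_id
    exact (tendsto_const_nhds.sub (h1.const_smul Complex.I)).add (h2.const_smul Complex.I)
  -- frequently small
  have freq : ∀ δ : ℝ, 0 < δ → ∃ᶠ B in atTop, ‖Φ B‖ ≤ δ := by
    have contOn : ContinuousOn
        (fun p : ℝ × ℝ => ENNReal.ofReal ‖FRaux g (p.1 + p.2 * Complex.I)‖)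
        (Ioc ε A ×ˢ (univ : Set ℝ)) := by
      apply ENNReal.continuous_ofReal.comp_continuousOn
      apply ContinuousOn.norm
      apply (FRaux_cont hg).comp
      · exact ((Complex.continuous_ofReal.comp continuous_fst).add
          ((Complex.continuous_ofReal.comp continuous_snd).mul continuous_const)).continuousOn
      · intro p hp
        have h1 : ((p.1 : ℂ) + (p.2 : ℂ) * Complex.I).re = p.1 := by simp
        simp only [mem_setOf_eq, Function.comp, h1]
        exact lt_of_lt_of_le hε hp.1.1.le
    set H : ℝ → ℝ≥0∞ :=
      fun B => ∫⁻ x in Ioc ε A, ENNReal.ofReal ‖FRaux g (x + B * Complex.I)‖ with hH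
    have Hfin : (∫⁻ B : ℝ, H B) ≠ ⊤ := by
      have hmeasu : AEMeasurable
          (Function.uncurry fun (x B : ℝ) => ENNReal.ofReal ‖FRaux g (x + B * Complex.I)‖)
          ((volume.restrict (Ioc ε A)).prod volume) := by
        have heq : (volume.restrict (Ioc ε A)).prod (volume : Measure ℝ)
            = (volume.prod volume).restrict (Ioc ε A ×ˢ (univ : Set ℝ)) := by
          rw [← Measure.prod_restrict, Measure.restrict_univ]
        rw [heq]
        exact contOn.aemeasurable (measurableSet_Ioc.prod MeasurableSet.univ)
      have swap := lintegral_lintegral_swap hmeasu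
      have hle : (∫⁻ x in Ioc ε A,
          ∫⁻ B : ℝ, ENNReal.ofReal ‖FRaux g (x + B * Complex.I)‖ ∂volume)
          ≤ ENNReal.ofReal M * volume (Ioc ε A) := by
        rw [← setLIntegral_const (Ioc ε A) (ENNReal.ofReal M)]
        refine setLIntegral_mono' measurableSet_Ioc fun x hx => ?_
        refine le_trans (lineBound x (lt_trans hε hx.1)) ?_
        apply ENNReal.ofReal_le_ofReal
        have hx0 : 0 < x := lt_trans hε hx.1
        have : Real.exp (-x) ≤ 1 := Real.exp_le_one_iff.2 (by linarith)
        nlinarith [Real.exp_pos (-x)]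
      rw [swap] at hle
      exact ne_top_of_le_ne_top (ENNReal.mul_ne_top ENNReal.ofReal_ne_top (by rw [Real.volume_Ioc]; exact ENNReal.ofReal_ne_top)) hle
    intro δ hδ
    have freqH : ∃ᶠ B in atTop, H B < ENNReal.ofReal δ := by
      by_contra hcon
      rw [Filter.not_frequently] at hcon
      obtain ⟨N, hN⟩ := eventually_atTop.1 hcon
      have htop : (⊤ : ℝ≥0∞) ≤ ∫⁻ B : ℝ, H B := by
        calc (⊤ : ℝ≥0∞) = ENNReal.ofReal δ * volume (Ici N) := by
              rw [Real.volume_Ici, ENNReal.mul_top (ENNReal.ofReal_pos.2 hδ).ne']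
          _ = ∫⁻ _ in Ici N, ENNReal.ofReal δ := (setLIntegral_const _ _).symm
          _ ≤ ∫⁻ B in Ici N, H B :=
              setLIntegral_mono' measurableSet_Ici fun B hB => not_lt.1 (hN B hB)
          _ ≤ ∫⁻ B : ℝ, H B := setLIntegral_le_lintegral _ _
      exact Hfin (top_le_iff.1 htop)
    refine ((freqH.and_eventually (eventually_ge_atTop (0:ℝ))).mono ?_)
    rintro B ⟨hHB, hB0⟩
    rw [rect B hB0, intervalIntegral.integral_of_le hεA]
    refine le_trans (norm_integral_le_lintegral_norm _) ?_
    have := ENNReal.toReal_mono ENNReal.ofReal_ne_top hHB.le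
    rwa [ENNReal.toReal_ofReal hδ.le] at this
  have hL0 : L = 0 := by
    by_contra h
    have hδ : 0 < ‖L‖ / 2 := by
      have := norm_pos_iff.2 h
      linarith
    have hev : ∀ᶠ B in atTop, ‖L‖ / 2 < ‖Φ B‖ :=
      (tends.norm).eventually_const_lt (by linarith [norm_pos_iff.2 h])
    obtain ⟨B, h1, h2⟩ := ((freq _ hδ).and_eventually hev).exists
    linarith
  -- extract the real identity
  have hT1r : T1 = ((∫ x in ε..A, ‖g x‖ ^ 2 * Real.exp (-x) : ℝ) : ℂ) := by
    rw [hT1]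
    rw [intervalIntegral.integral_congr (g := fun x : ℝ =>
      ((‖g x‖ ^ 2 * Real.exp (-x) : ℝ) : ℂ)) (fun x _ => FRaux_real g x)]
    exact intervalIntegral.integral_ofReal
  set r : ℝ := ∫ x in ε..A, ‖g x‖ ^ 2 * Real.exp (-x) with hr
  have hident : r = -(P ε).im + (P A).im := by
    have : (r : ℂ) = Complex.I • P ε - Complex.I • P A := by
      rw [← hT1r]
      have := hL0
      rw [hL] at this
      linear_combination this
    have := congrArg Complex.re this
    simpa [Complex.smul_re, Complex.I_re, Complex.I_im, Complex.mul_re] using this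
  -- bound each Im
  have imBound : ∀ c : ℝ, 0 < c → |(P c).im| ≤ Real.exp (-c) * M / 2 := by
    intro c hc
    set f : ℝ → ℂ := fun y => FRaux g (c + y * Complex.I) with hf
    have hint : Integrable f := lineInt c hc
    set h : ℝ → ℝ := fun y => |(f y).im| with hh
    have hsym : ∀ y : ℝ, h (-y) = h y := by
      intro y
      have hc2 : (c : ℂ) + ((-y : ℝ) : ℂ) * Complex.I
          = (starRingEnd ℂ) ((c:ℂ) + (y:ℝ) * Complex.I) := by
        simp [Complex.ext_iff]
      have : f (-y) = (starRingEnd ℂ) (f y) := by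
        rw [hf]
        simp only []
        rw [Complex.ofReal_neg] at hc2 ⊢
        rw [hc2, FRaux_conj]
      rw [hh]
      simp only [this, Complex.conj_im, abs_neg]
    have hinth : Integrable h := hint.im.abs
    have hIm : (P c).im = ∫ y in Ioi (0:ℝ), (f y).im := by
      rw [hP]
      exact (integral_im hint.integrableOn).symm
    have hJle : |(P c).im| ≤ ∫ y in Ioi (0:ℝ), h y := by
      rw [hIm, hh]
      simpa using norm_integral_le_integral_norm (μ := volume.restrict (Ioi 0)) fun y => (f y).im
    have hneg : (∫ y in Ioi (0:ℝ), h y) = ∫ y in Iic (0:ℝ), h y := by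
      have h1 := integral_comp_neg_Ioi (0:ℝ) h
      rw [neg_zero] at h1
      rw [← h1]
      exact setIntegral_congr_fun measurableSet_Ioi fun y _ => (hsym y).symm
    have hsplit : (∫ y, h y) = (∫ y in Iic (0:ℝ), h y) + ∫ y in Ioi (0:ℝ), h y :=
      (intervalIntegral.integral_Iic_add_Ioi hinth.integrableOn hinth.integrableOn).symm
    have hmono : (∫ y, h y) ≤ ∫ y, ‖f y‖ := by
      refine integral_mono hinth hint.norm fun y => ?_
      simpa [hh] using Complex.abs_im_le_norm (f y)
    have hnorm : (∫ y, ‖f y‖) ≤ Real.exp (-c) * M := by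
      have h1 : ENNReal.ofReal (∫ y, ‖f y‖) = ∫⁻ y, ENNReal.ofReal ‖f y‖ :=
        ofReal_integral_eq_lintegral_ofReal hint.norm
          (Filter.Eventually.of_forall fun y => norm_nonneg _)
      have h2 := lineBound c hc
      rw [← h1] at h2
      exact (ENNReal.ofReal_le_ofReal_iff (by positivity)).1 h2
    linarith
  have h1 := imBound ε hε
  have h2 := imBound A hA
  rw [hident]
  have e1 : -(P ε).im ≤ |(P ε).im| := neg_le_abs _
  have e2 : (P A).im ≤ |(P A).im| := le_abs_self _
  nlinarith [Real.exp_pos (-ε), Real.exp_pos (-A)]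

/-- Boundedness of the restriction map from the Hardy space `H²(ℂ₊)` to the weighted space
`L²((0,∞), e^{-x}dx)` (Fejér–Riesz type inequality): if `g` is holomorphic on
`ℂ₊ = {z : Re z > 0}` and `M ≥ 0` satisfies `∫_ℝ |g(x+iy)|² dy ≤ M` for every `x > 0`, then
`∫₀^∞ |g(x)|² e^{-x} dx ≤ M/2`. -/
theorem hardy_restriction_bounded (g : ℂ → ℂ)
    (hg : DifferentiableOn ℂ g {z : ℂ | 0 < z.re}) (M : ℝ) (hM : 0 ≤ M)
    (hmeas : ∀ x : ℝ, 0 < x → Measurable fun y : ℝ => g (x + y * Complex.I))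
    (hbound : ∀ x : ℝ, 0 < x →
      (∫⁻ y : ℝ, ENNReal.ofReal (‖g (x + y * Complex.I)‖ ^ 2)) ≤
        ENNReal.ofReal M) :
    (∫⁻ x in Ioi (0 : ℝ), ENNReal.ofReal (‖g x‖ ^ 2 * Real.exp (-x))) ≤
      ENNReal.ofReal (M / 2) := by
  set φ : ℝ → ℝ := fun x => ‖g x‖ ^ 2 * Real.exp (-x) with hφ
  have hφnn : ∀ x, 0 ≤ φ x := fun x => by positivity
  have hφc : ContinuousOn φ (Ioi 0) := by
    have hgr : ContinuousOn (fun x : ℝ => g ((x : ℝ) : ℂ)) (Ioi 0) := by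
      refine hg.continuousOn.comp Complex.continuous_ofReal.continuousOn ?_
      intro x hx
      simpa using hx
    exact ContinuousOn.mul (f := fun x : ℝ => ‖g x‖ ^ 2) (g := fun x : ℝ => Real.exp (-x)) (hgr.norm.pow 2) ((Real.continuous_exp.comp continuous_neg).continuousOn)
  set s : ℕ → Set ℝ := fun n => Ioc (1 / ((n : ℝ) + 1)) ((n : ℝ) + 1) with hs
  have haux : ∀ n : ℕ, 0 < 1 / ((n : ℝ) + 1) ∧ 1 / ((n : ℝ) + 1) ≤ (n : ℝ) + 1 := by
    intro n
    have h1 : (0:ℝ) < (n : ℝ) + 1 := by positivity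
    constructor
    · positivity
    · have h2 : (1:ℝ) ≤ (n : ℝ) + 1 := by
        have := Nat.cast_nonneg (α := ℝ) n
        linarith
      calc 1 / ((n : ℝ) + 1) ≤ 1 := by
            rw [div_le_one h1]; exact h2
        _ ≤ (n : ℝ) + 1 := h2
  have hsub : ∀ n, s n ⊆ Ioi (0:ℝ) := by
    intro n x hx
    exact lt_trans (haux n).1 hx.1
  have hmono : ∀ {m n : ℕ}, m ≤ n → s m ⊆ s n := by
    intro m n hmn
    apply Ioc_subset_Ioc
    · apply one_div_le_one_div_of_le
      · positivity
      · have : (m:ℝ) ≤ (n:ℝ) := Nat.cast_le.2 hmn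
        linarith
    · have : (m:ℝ) ≤ (n:ℝ) := Nat.cast_le.2 hmn
      linarith
  have hci : ∀ m : ℕ, IntegrableOn φ (s m) := by
    intro m
    have : IntegrableOn φ (Icc (1 / ((m : ℝ) + 1)) ((m : ℝ) + 1)) := by
      apply ContinuousOn.integrableOn_Icc
      apply hφc.mono
      intro x hx
      exact lt_of_lt_of_le (haux m).1 hx.1
    exact this.mono_set Ioc_subset_Icc_self
  have hofReal : ∀ m : ℕ, (∫⁻ x in s m, ENNReal.ofReal (φ x)) = ENNReal.ofReal (∫ x in s m, φ x) :=
    fun m => (ofReal_integral_eq_lintegral_ofReal (hci m)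
      (Filter.Eventually.of_forall fun x => hφnn x)).symm
  have piece : ∀ n : ℕ, (∫⁻ x in s n, ENNReal.ofReal (φ x)) ≤ ENNReal.ofReal (M / 2) := by
    intro n
    have bound : ∀ m : ℕ, n ≤ m → (∫⁻ x in s n, ENNReal.ofReal (φ x)) ≤
        ENNReal.ofReal (M / 2 * (Real.exp (-(1 / ((m : ℝ) + 1))) + Real.exp (-((m : ℝ) + 1)))) := by
      intro m hnm
      calc (∫⁻ x in s n, ENNReal.ofReal (φ x)) ≤ ∫⁻ x in s m, ENNReal.ofReal (φ x) :=
            lintegral_mono_set (hmono hnm)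
        _ = ENNReal.ofReal (∫ x in s m, φ x) := hofReal m
        _ ≤ _ := by
            apply ENNReal.ofReal_le_ofReal
            have := FRaux_key hg hM hmeas hbound (haux m).1 (haux m).2
            rwa [intervalIntegral.integral_of_le (haux m).2] at this
    have hlim : Tendsto (fun m : ℕ =>
        ENNReal.ofReal (M / 2 * (Real.exp (-(1 / ((m : ℝ) + 1))) + Real.exp (-((m : ℝ) + 1)))))
        atTop (nhds (ENNReal.ofReal (M / 2))) := by
      have t0 : Tendsto (fun m : ℕ => 1 / ((m : ℝ) + 1)) atTop (nhds 0) :=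
        tendsto_one_div_add_atTop_nhds_zero_nat
      have t1 : Tendsto (fun m : ℕ => Real.exp (-(1 / ((m : ℝ) + 1)))) atTop (nhds 1) := by
        have hneg : Tendsto (fun m : ℕ => -(1 / ((m : ℝ) + 1))) atTop (nhds 0) := by
          simpa using t0.neg
        have := (Real.continuous_exp.tendsto (0:ℝ)).comp hneg
        simpa [Function.comp_def] using this
      have t2 : Tendsto (fun m : ℕ => Real.exp (-((m : ℝ) + 1))) atTop (nhds 0) := by
        apply Real.tendsto_exp_atBot.comp
        apply tendsto_neg_atBot_iff.2
        exact tendsto_atTop_add_const_right _ 1 tendsto_natCast_atTop_atTop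
      have t3 : Tendsto (fun m : ℕ => M / 2 * (Real.exp (-(1 / ((m : ℝ) + 1))) +
          Real.exp (-((m : ℝ) + 1)))) atTop (nhds (M / 2 * (1 + 0))) :=
        tendsto_const_nhds.mul (t1.add t2)
      have := (ENNReal.continuous_ofReal.tendsto _).comp t3
      simpa [Function.comp_def] using this
    exact ge_of_tendsto hlim (eventually_atTop.2 ⟨n, bound⟩)
  -- monotone convergence
  have base : AEMeasurable (fun x => ENNReal.ofReal (φ x)) (volume.restrict (Ioi (0:ℝ))) :=
    (ENNReal.continuous_ofReal.comp_continuousOn hφc).aemeasurable measurableSet_Ioi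
  set f : ℕ → ℝ → ℝ≥0∞ := fun n => (s n).indicator (fun x => ENNReal.ofReal (φ x)) with hf
  have hfm : ∀ n, AEMeasurable (f n) (volume.restrict (Ioi (0:ℝ))) :=
    fun n => base.indicator measurableSet_Ioc
  have hfmono : ∀ᵐ x ∂(volume.restrict (Ioi (0:ℝ))), Monotone fun n => f n x := by
    refine Filter.Eventually.of_forall fun x => ?_
    intro m n hmn
    exact Set.indicator_le_indicator_of_subset (hmono hmn) (fun y => zero_le) x
  have hMCT := lintegral_iSup' hfm hfmono
  have hsup_eq : (∫⁻ x in Ioi (0:ℝ), ENNReal.ofReal (φ x)) =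
      ∫⁻ x in Ioi (0:ℝ), ⨆ n, f n x := by
    refine setLIntegral_congr_fun measurableSet_Ioi (fun x hx => ?_)
    obtain ⟨N, hN⟩ := exists_nat_gt (max (1 / x) x)
    have hxN : x ∈ s N := by
      constructor
      · rw [div_lt_iff₀ (by positivity)]
        have h1 : 1 / x < (N:ℝ) := lt_of_le_of_lt (le_max_left _ _) hN
        rw [div_lt_iff₀ hx] at h1
        nlinarith [hx]
      · have := lt_of_le_of_lt (le_max_right (1/x) x) hN
        linarith
    apply le_antisymm
    · refine le_trans ?_ (le_iSup _ N)
      rw [hf]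
      simp only [Set.indicator_of_mem hxN]
      exact le_refl _
    · exact iSup_le fun n => Set.indicator_le_self _ _ x
  have hterm : ∀ n, (∫⁻ x, f n x ∂(volume.restrict (Ioi (0:ℝ)))) =
      ∫⁻ x in s n, ENNReal.ofReal (φ x) := by
    intro n
    rw [hf]
    rw [lintegral_indicator measurableSet_Ioc]
    rw [Measure.restrict_restrict measurableSet_Ioc]
    rw [inter_eq_self_of_subset_left (hsub n)]
  calc (∫⁻ x in Ioi (0:ℝ), ENNReal.ofReal (φ x)) = ∫⁻ x in Ioi (0:ℝ), ⨆ n, f n x := hsup_eq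
    _ = ⨆ n, ∫⁻ x, f n x ∂(volume.restrict (Ioi (0:ℝ))) := hMCT
    _ = ⨆ n, ∫⁻ x in s n, ENNReal.ofReal (φ x) := by simp_rw [hterm]
    _ ≤ ENNReal.ofReal (M / 2) := iSup_le piece
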